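/- For the two challenged smart meters masked with independent uniform shares s₀, s₁ ∈ ZMod k, the joint distribution of (m_b + s₀, m_{1-b} + s₁, s₀ + s₁ + c) is the same for b = 0 and b = 1, for any constant c ∈ ZMod k and any measurements m₀, m₁. -/
import Mathlib

lemma uniform_map_equiv {α : Type*} [Fintype α] [Nonempty α] (e : α ≃ α) :
    (PMF.uniformOfFintype α).map e = PMF.uniformOfFintype α := by
  ext x
  rw [PMF.map_apply]
  rw [tsum_eq_single (e.symm x) (by intro b hb; rw [if_neg]; exact fun h => hb (by simp [h]))]
  simp

/-- The adversary's view `(m_b + s₀, m_{1-b} + s₁, s₀ + s₁ + c)` with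
independent uniform shares `s₀, s₁` has the same distribution for both
assignments `b = 0` and `b = 1`. -/
theorem masked_view_independent_of_assignment (k : ℕ) [NeZero k]
    (m₀ m₁ c : ZMod k) :
    (PMF.uniformOfFintype (ZMod k × ZMod k)).map
        (fun p => (m₀ + p.1, m₁ + p.2, p.1 + p.2 + c))
      = (PMF.uniformOfFintype (ZMod k × ZMod k)).map
        (fun p => (m₁ + p.1, m₀ + p.2, p.1 + p.2 + c)) := by
  let e : (ZMod k × ZMod k) ≃ (ZMod k × ZMod k) :=
    (Equiv.addRight (m₁ - m₀)).prodCongr (Equiv.addRight (m₀ - m₁))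
  calc (PMF.uniformOfFintype (ZMod k × ZMod k)).map
        (fun p => (m₀ + p.1, m₁ + p.2, p.1 + p.2 + c))
      = ((PMF.uniformOfFintype (ZMod k × ZMod k)).map e).map
        (fun p => (m₀ + p.1, m₁ + p.2, p.1 + p.2 + c)) := by
        rw [uniform_map_equiv]
    _ = _ := by
        rw [PMF.map_comp]
        congr 1
        funext p
        simp only [e, Function.comp, Equiv.prodCongr_apply, Equiv.coe_addRight, Prod.map]
        refine Prod.ext (by ring) (Prod.ext (by ring) (by ring))
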